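/- In the geometric realization of a connected simply connected Cartan graph 𝒞 with real root system, let T₀ = ⋃_{b∈A} K^b and let T be the convex hull of T₀. Then T = ⋃_{x,y∈T₀} [x,y]; that is, the union of all closed segments between points of T₀ is already convex and equals the convex hull. -/

import Mathlib

open Set

noncomputable section

section Arrangements

variable {V : Type*} [AddCommGroup V] [Module ℝ V] [TopologicalSpace V]

/-- The kernel of a linear functional, as a subset of `V`. -/
def dualKer (α : Module.Dual ℝ V) : Set V := {v | α v = 0}

/-- A linear hyperplane: the kernel of a nonzero linear functional. -/
def IsLinearHyperplane (H : Set V) : Prop :=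
  ∃ α : Module.Dual ℝ V, α ≠ 0 ∧ H = dualKer α

/-- A hyperplane arrangement `(𝒜, T)`: `T` is an open convex cone, `𝒜` a set of linear
hyperplanes, each meeting `T`, which is locally finite in `T`. -/
structure IsHyperplaneArrangement (𝒜 : Set (Set V)) (T : Set V) : Prop where
  T_nonempty : T.Nonempty
  T_open : IsOpen T
  T_convex : Convex ℝ T
  T_cone : ∀ x ∈ T, ∀ c : ℝ, 0 < c → c • x ∈ T
  hyperplanes : ∀ H ∈ 𝒜, IsLinearHyperplane H
  meets : ∀ H ∈ 𝒜, (H ∩ T).Nonempty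
  locallyFinite : ∀ x ∈ T, ∃ U : Set V, IsOpen U ∧ x ∈ U ∧ U ⊆ T ∧
    {H ∈ 𝒜 | (H ∩ U).Nonempty}.Finite

/-- The chambers: connected components of `T \ ⋃ 𝒜`. -/
def chambersOf (𝒜 : Set (Set V)) (T : Set V) : Set (Set V) :=
  {K | ∃ x ∈ T \ ⋃₀ 𝒜, K = connectedComponentIn (T \ ⋃₀ 𝒜) x}

/-- `H` is a wall of the chamber `K`: a hyperplane missing `K` such that
`H ∩ cl(K)` spans `H`. -/
def IsWall (K H : Set V) : Prop :=
  IsLinearHyperplane H ∧ H ∩ K = ∅ ∧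
    (Submodule.span ℝ (H ∩ closure K) : Set V) = H

/-- An open simplicial cone: `⋂_{α ∈ B} α⁻¹(ℝ_{>0})` for a basis `B` of the dual space. -/
def IsOpenSimplicialCone (K : Set V) : Prop :=
  ∃ b : Module.Basis (Fin (Module.finrank ℝ V)) ℝ (Module.Dual ℝ V),
    K = {v | ∀ i, 0 < b i v}

/-- A Tits arrangement: a hyperplane arrangement all of whose chambers are open simplicial
cones (simplicial) and such that every wall of every chamber belongs to `𝒜` (thin). -/
structure IsTitsArrangement (𝒜 : Set (Set V)) (T : Set V) extends
    IsHyperplaneArrangement 𝒜 T : Prop where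
  simplicial : ∀ K ∈ chambersOf 𝒜 T, IsOpenSimplicialCone K
  thin : ∀ K ∈ chambersOf 𝒜 T, ∀ H : Set V, IsWall K H → H ∈ 𝒜

/-- `R` is a root system with associated arrangement `𝒜`: `0 ∉ R`, `R = -R` and
`𝒜 = {ker α | α ∈ R}`. -/
def IsAssociatedRootSystem (𝒜 : Set (Set V)) (R : Set (Module.Dual ℝ V)) : Prop :=
  (0 : Module.Dual ℝ V) ∉ R ∧ (∀ α ∈ R, -α ∈ R) ∧ 𝒜 = {H | ∃ α ∈ R, H = dualKer α}

/-- The root basis `B^K` of a chamber `K`. -/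
def rootBasisOf (R : Set (Module.Dual ℝ V)) (K : Set V) : Set (Module.Dual ℝ V) :=
  {α ∈ R | IsWall K (dualKer α) ∧ ∀ x ∈ K, 0 < α x}

/-- `β` is a non-negative real linear combination of elements of `B`. -/
def InNNRealSpan (B : Set (Module.Dual ℝ V)) (β : Module.Dual ℝ V) : Prop :=
  ∃ (s : Finset (Module.Dual ℝ V)) (c : Module.Dual ℝ V → ℝ),
    ↑s ⊆ B ∧ (∀ α ∈ s, 0 ≤ c α) ∧ β = ∑ α ∈ s, c α • α

/-- `β` is a non-negative integral linear combination of elements of `B`. -/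
def InNatSpan (B : Set (Module.Dual ℝ V)) (β : Module.Dual ℝ V) : Prop :=
  ∃ (s : Finset (Module.Dual ℝ V)) (c : Module.Dual ℝ V → ℕ),
    ↑s ⊆ B ∧ β = ∑ α ∈ s, (c α : ℝ) • α

/-- `β` is an integral linear combination of elements of `B`. -/
def InIntSpan (B : Set (Module.Dual ℝ V)) (β : Module.Dual ℝ V) : Prop :=
  ∃ (s : Finset (Module.Dual ℝ V)) (c : Module.Dual ℝ V → ℤ),
    ↑s ⊆ B ∧ β = ∑ α ∈ s, (c α : ℝ) • α

/-- The crystallographic property: `R ⊆ ±∑_{α ∈ B^K} ℕ₀ α` for every chamber `K`. -/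
def IsCrystallographic (𝒜 : Set (Set V)) (T : Set V) (R : Set (Module.Dual ℝ V)) : Prop :=
  ∀ K ∈ chambersOf 𝒜 T, ∀ β ∈ R,
    InNatSpan (rootBasisOf R K) β ∨ InNatSpan (rootBasisOf R K) (-β)

/-- The chamber complex `𝒮(𝒜,T)`. -/
def chamberComplexOf (𝒜 : Set (Set V)) (T : Set V) : Set (Set V) :=
  {S | ∃ K ∈ chambersOf 𝒜 T, ∃ W : Set (Set V),
    (∀ H ∈ W, IsWall K H) ∧ S = closure K ∩ ⋂₀ W}

/-- `(𝒜,T)` is `k`-spherical: every simplex of the chamber complex of codimension `k`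
meets `T`. -/
def IsKSpherical (𝒜 : Set (Set V)) (T : Set V) (k : ℕ) : Prop :=
  ∀ S ∈ chamberComplexOf 𝒜 T,
    Module.finrank ℝ (Submodule.span ℝ S) = Module.finrank ℝ V - k → (S ∩ T).Nonempty

/-- A reduced root system: `R ∩ ℝα = {±α}` for every `α ∈ R`. -/
def IsReducedRS (R : Set (Module.Dual ℝ V)) : Prop :=
  ∀ α ∈ R, {β ∈ R | ∃ c : ℝ, β = c • α} = {α, -α}

/-- The hyperplane `H` separates `K` and `K'`. -/
def SeparatesH (H K K' : Set V) : Prop :=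
  ∃ α : Module.Dual ℝ V, H = dualKer α ∧ (∀ x ∈ K, 0 < α x) ∧ ∀ x ∈ K', α x < 0

/-- The set `S(K,K')` of hyperplanes of `𝒜` separating `K` and `K'`. -/
def sepSet (𝒜 : Set (Set V)) (K K' : Set V) : Set (Set V) :=
  {H ∈ 𝒜 | SeparatesH H K K'}

/-- The reduction of a set of functionals: the shortest elements on each line. -/
def reducedOf (S : Set (Module.Dual ℝ V)) : Set (Module.Dual ℝ V) :=
  {β ∈ S | ∀ γ ∈ S, ∀ c : ℝ, γ = c • β → 1 ≤ |c|}

end Arrangements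

/-- The standard real vector space `ℝ^r`. -/
abbrev Vr (r : ℕ) : Type := Fin r → ℝ
section CartanGraphs

/-- A generalized Cartan matrix. -/
def IsGCM {I : Type*} (C : Matrix I I ℤ) : Prop :=
  (∀ i, C i i = 2) ∧ (∀ i j, i ≠ j → C i j ≤ 0) ∧
    ∀ i j, i ≠ j → C i j = 0 → C j i = 0

variable {I A : Type*} [Fintype I] [DecidableEq I]

/-- The reflection `σ_i` attached to a generalized Cartan matrix, acting on `ℤ^I`;
on the standard basis it is `σ_i(α_j) = α_j - c_{ij} α_i`. -/
def gcmSigma (C : Matrix I I ℤ) (i : I) : (I → ℤ) → (I → ℤ) :=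
  fun v k => v k - if k = i then ∑ j, C i j * v j else 0

/-- `WeylHom ρ C a b f` : `f` is a morphism from `a` to `b` of the Weyl groupoid of the
Cartan graph `(I, A, ρ, C)`, i.e. a composite of maps `σ_i^c ∈ Hom(c, ρ_i(c))`. -/
inductive WeylHom (ρ : I → A → A) (C : A → Matrix I I ℤ) :
    A → A → ((I → ℤ) → (I → ℤ)) → Prop
  | id (a : A) : WeylHom ρ C a a _root_.id
  | comp {a b : A} {f : (I → ℤ) → (I → ℤ)} (i : I) :
      WeylHom ρ C a b f → WeylHom ρ C a (ρ i b) (gcmSigma (C b) i ∘ f)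

/-- The axioms of a Cartan graph: `A` nonempty, all `C^a` generalized Cartan matrices,
(C1) each `ρ_i` an involution, (C2) `c^a_{ij} = c^{ρ_i(a)}_{ij}`. -/
def IsCartanGraph (ρ : I → A → A) (C : A → Matrix I I ℤ) : Prop :=
  Nonempty A ∧ (∀ a, IsGCM (C a)) ∧ (∀ i, Function.Involutive (ρ i)) ∧
    ∀ a i j, C a i j = C (ρ i a) i j

/-- Connectedness: all Hom-sets of the Weyl groupoid are nonempty. -/
def CGConnected (ρ : I → A → A) (C : A → Matrix I I ℤ) : Prop :=
  ∀ a b : A, ∃ f, WeylHom ρ C a b f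

/-- Simple connectedness: `Hom(a,a) = {id}` for every object `a`. -/
def CGSimplyConnected (ρ : I → A → A) (C : A → Matrix I I ℤ) : Prop :=
  ∀ (a : A) (f : (I → ℤ) → (I → ℤ)), WeylHom ρ C a a f → f = _root_.id

/-- The set of real roots at `a`: all images of standard basis vectors under morphisms
into `a`. -/
def realRootsAt (ρ : I → A → A) (C : A → Matrix I I ℤ) (a : A) : Set (I → ℤ) :=
  {v | ∃ (b : A) (f : (I → ℤ) → (I → ℤ)) (j : I), WeylHom ρ C b a f ∧ v = f (Pi.single j 1)}

/-- A root system of type `𝒞 = (I, A, ρ, C)`: axioms (R1)-(R4). -/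
def IsRootSystemOfType (ρ : I → A → A) (C : A → Matrix I I ℤ)
    (R : A → Set (I → ℤ)) : Prop :=
  (∀ a, R a = {v ∈ R a | ∀ i, 0 ≤ v i} ∪ (fun v => -v) '' {v ∈ R a | ∀ i, 0 ≤ v i}) ∧
  (∀ (a : A) (i : I), {v ∈ R a | ∃ n : ℤ, v = n • Pi.single i 1} =
      {Pi.single i 1, -Pi.single i 1}) ∧
  (∀ (a : A) (i : I), gcmSigma (C a) i '' R a = R (ρ i a)) ∧
  ∀ (a : A) (i j : I), i ≠ j →
    {v ∈ R a | ∃ m n : ℕ, v = (m : ℤ) • Pi.single i 1 + (n : ℤ) • Pi.single j 1}.Finite →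
    (ρ i ∘ ρ j)^[{v ∈ R a |
        ∃ m n : ℕ, v = (m : ℤ) • Pi.single i 1 + (n : ℤ) • Pi.single j 1}.ncard] a = a

end CartanGraphs
section GeometricRealization

variable {r : ℕ} {A : Type*}

/-- The map `ψ : ℤ^r → V*` determined by a basis `(β_i)` of `V*`: `ψ(α_i) = β_i`. -/
def psiMap (bβ : Module.Basis (Fin r) ℝ (Module.Dual ℝ (Vr r))) (v : Fin r → ℤ) :
    Module.Dual ℝ (Vr r) :=
  ∑ i, (v i : ℝ) • bβ i

/-- The open cone `K^b` attached to the (unique) morphism `u ∈ Hom(b,a)`: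
`K^b = ⋂_i ψ_b(α_i)^+` where `ψ_b(α_i) = ψ(u(α_i))`. -/
def Kch (bβ : Module.Basis (Fin r) ℝ (Module.Dual ℝ (Vr r)))
    (u : (Fin r → ℤ) → (Fin r → ℤ)) : Set (Vr r) :=
  {x | ∀ i : Fin r, 0 < psiMap bβ (u (Pi.single i 1)) x}

/-- The root system `R = ψ((R^re)^a)` of the geometric realization. -/
def geoR (ρ : Fin r → A → A) (C : A → Matrix (Fin r) (Fin r) ℤ) (a : A)
    (bβ : Module.Basis (Fin r) ℝ (Module.Dual ℝ (Vr r))) : Set (Module.Dual ℝ (Vr r)) :=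
  psiMap bβ '' realRootsAt ρ C a

/-- The arrangement `𝒜 = {ker α | α ∈ R}` of the geometric realization. -/
def geoA (ρ : Fin r → A → A) (C : A → Matrix (Fin r) (Fin r) ℤ) (a : A)
    (bβ : Module.Basis (Fin r) ℝ (Module.Dual ℝ (Vr r))) : Set (Set (Vr r)) :=
  {H | ∃ α ∈ geoR ρ C a bβ, H = dualKer α}

/-- Adjacency of objects `b, c` of the Cartan graph: the corresponding chambers `K^b`, `K^c`
are distinct and the span of `cl(K^b) ∩ cl(K^c)` is the wall `ker ψ_b(α_i)` for some `i`. -/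
def objAdj (ρ : Fin r → A → A) (C : A → Matrix (Fin r) (Fin r) ℤ) (a : A)
    (bβ : Module.Basis (Fin r) ℝ (Module.Dual ℝ (Vr r))) (b c : A) : Prop :=
  ∃ u u' : (Fin r → ℤ) → (Fin r → ℤ), WeylHom ρ C b a u ∧ WeylHom ρ C c a u' ∧
    ∃ i : Fin r, Kch bβ u ≠ Kch bβ u' ∧
      (Submodule.span ℝ (closure (Kch bβ u) ∩ closure (Kch bβ u')) : Set (Vr r)) =
        dualKer (psiMap bβ (u (Pi.single i 1)))

/-- The gallery distance between the chambers `K^b` and `K^{b'}`: the minimal length of a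
gallery from `K^b` to `K^{b'}`. -/
def galleryDist (ρ : Fin r → A → A) (C : A → Matrix (Fin r) (Fin r) ℤ) (a : A)
    (bβ : Module.Basis (Fin r) ℝ (Module.Dual ℝ (Vr r))) (b b' : A) : ℕ :=
  sInf {m : ℕ | ∃ g : ℕ → A, g 0 = b ∧ g m = b' ∧
    ∀ k < m, objAdj ρ C a bβ (g k) (g (k + 1))}

end GeometricRealization


section Statement14Aux

open Relation Filter

variable {r : ℕ} {A : Type*} {ρ : Fin r → A → A} {C : A → Matrix (Fin r) (Fin r) ℤ}

/-! ### Linear algebra of `gcmSigma` and Weyl groupoid morphisms -/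

lemma gcmSigma_isLinear (M : Matrix (Fin r) (Fin r) ℤ) (i : Fin r) :
    IsLinearMap ℤ (gcmSigma M i) := by
  constructor
  · intro v w
    funext k
    simp only [gcmSigma, Pi.add_apply, mul_add, Finset.sum_add_distrib]
    split <;> ring
  · intro z v
    funext k
    simp only [gcmSigma, Pi.smul_apply, smul_eq_mul]
    rw [show (∑ j, M i j * (z * v j)) = z * ∑ j, M i j * v j by
      rw [Finset.mul_sum]; exact Finset.sum_congr rfl fun j _ => by ring]
    split <;> ring

lemma weylHom_isLinear {b c : A} {f} (h : WeylHom ρ C b c f) : IsLinearMap ℤ f := by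
  induction h with
  | id => exact ⟨fun _ _ => rfl, fun _ _ => rfl⟩
  | @comp e f₀ i h ih =>
      have hg := gcmSigma_isLinear (C e) i
      exact ⟨fun x y => by simp only [Function.comp_apply, ih.1, hg.1],
             fun z x => by simp only [Function.comp_apply, ih.2, hg.2]⟩

lemma gcmSigma_gcmSigma (M : Matrix (Fin r) (Fin r) ℤ) (i : Fin r) (h2 : M i i = 2)
    (v : Fin r → ℤ) : gcmSigma M i (gcmSigma M i v) = v := by
  have hs : (∑ j, M i j * (gcmSigma M i v) j) = -(∑ j, M i j * v j) := by
    simp only [gcmSigma, mul_sub, mul_ite, mul_zero, Finset.sum_sub_distrib,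
      Finset.sum_ite_eq', Finset.mem_univ, if_true, h2]
    ring
  funext k
  simp only [gcmSigma] at hs ⊢
  rw [hs]
  split <;> ring

lemma gcmSigma_congr {M N : Matrix (Fin r) (Fin r) ℤ} {i : Fin r}
    (h : ∀ j, M i j = N i j) : gcmSigma M i = gcmSigma N i := by
  funext v k
  simp only [gcmSigma, h]

lemma WeylHom.trans {b c d : A} {f g} (hf : WeylHom ρ C b c f) (hg : WeylHom ρ C c d g) :
    WeylHom ρ C b d (g ∘ f) := by
  induction hg with
  | id => exact hf
  | comp i h ih => exact WeylHom.comp i ih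

lemma weylHom_sigma (hCG : IsCartanGraph ρ C) (i : Fin r) (e : A) :
    WeylHom ρ C (ρ i e) e (gcmSigma (C e) i) := by
  have h1 := WeylHom.comp (ρ := ρ) (C := C) i (WeylHom.id (ρ i e))
  rw [hCG.2.2.1 i e, gcmSigma_congr (fun j => (hCG.2.2.2 e i j).symm)] at h1
  exact h1

lemma weylHom_sourceReflect (hCG : IsCartanGraph ρ C) {b c : A} {f}
    (i : Fin r) (h : WeylHom ρ C b c f) :
    WeylHom ρ C (ρ i b) c (f ∘ gcmSigma (C b) i) := by
  induction h with
  | id => exact weylHom_sigma hCG i _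
  | comp j h ih => exact WeylHom.comp j ih

lemma weylHom_inverse (hCG : IsCartanGraph ρ C) {b c : A} {f} (h : WeylHom ρ C b c f) :
    ∃ g, WeylHom ρ C c b g ∧ g ∘ f = _root_.id ∧ f ∘ g = _root_.id := by
  induction h with
  | id => exact ⟨_root_.id, WeylHom.id _, rfl, rfl⟩
  | @comp e f₀ i h ih =>
      obtain ⟨g, hg, hgf, hfg⟩ := ih
      have h2 : C e i i = 2 := (hCG.2.1 e).1 i
      refine ⟨g ∘ gcmSigma (C e) i,
        WeylHom.trans (weylHom_sigma hCG i e) hg, ?_, ?_⟩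
      · funext x
        simp only [Function.comp_apply, gcmSigma_gcmSigma _ _ h2]
        simpa using congrFun hgf x
      · funext x
        simp only [Function.comp_apply]
        have hfg' : f₀ (g (gcmSigma (C e) i x)) = gcmSigma (C e) i x := by
          simpa using congrFun hfg (gcmSigma (C e) i x)
        rw [hfg', gcmSigma_gcmSigma _ _ h2]
        rfl

/-! ### Real roots -/

variable {a : A}

lemma realRoots_map {b : A} {u} (hu : WeylHom ρ C b a u) {v}
    (hv : v ∈ realRootsAt ρ C b) : u v ∈ realRootsAt ρ C a := by
  obtain ⟨e, f, j, hf, rfl⟩ := hv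
  exact ⟨e, u ∘ f, j, hf.trans hu, rfl⟩

lemma realRoots_single (b : A) (j : Fin r) : Pi.single j 1 ∈ realRootsAt ρ C b :=
  ⟨b, _root_.id, j, WeylHom.id b, rfl⟩

lemma realRoots_rep (hCG : IsCartanGraph ρ C) {b : A} {u} (hu : WeylHom ρ C b a u) {w}
    (hw : w ∈ realRootsAt ρ C a) : ∃ v ∈ realRootsAt ρ C b, w = u v := by
  obtain ⟨g, hg, hgu, hug⟩ := weylHom_inverse hCG hu
  refine ⟨g w, realRoots_map hg hw, ?_⟩
  simpa using (congrFun hug w).symm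

lemma realRoots_ne_zero (hCG : IsCartanGraph ρ C) {b : A} {v}
    (hv : v ∈ realRootsAt ρ C b) : v ≠ 0 := by
  obtain ⟨e, f, j, hf, rfl⟩ := hv
  obtain ⟨g, hg, hgf, hfg⟩ := weylHom_inverse hCG hf
  intro h0
  have h1 := congrFun hgf (Pi.single j 1)
  rw [Function.comp_apply, h0, (weylHom_isLinear hg).map_zero] at h1
  have h2 := congrFun h1 j
  simp [Pi.single_eq_same] at h2

/-! ### `psiMap` lemmas -/

variable {bβ : Module.Basis (Fin r) ℝ (Module.Dual ℝ (Vr r))}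

lemma psiMap_single (bβ : Module.Basis (Fin r) ℝ (Module.Dual ℝ (Vr r))) (k : Fin r) :
    psiMap bβ (Pi.single k 1) = bβ k := by
  simp only [psiMap]
  rw [Finset.sum_eq_single k]
  · simp
  · intro j _ hj
    rw [Pi.single_eq_of_ne hj]
    simp
  · intro h; exact absurd (Finset.mem_univ k) h

lemma psiMap_add (bβ : Module.Basis (Fin r) ℝ (Module.Dual ℝ (Vr r))) (v w : Fin r → ℤ) :
    psiMap bβ (v + w) = psiMap bβ v + psiMap bβ w := by
  simp only [psiMap, Pi.add_apply, Int.cast_add, add_smul, Finset.sum_add_distrib]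

def psiHom (bβ : Module.Basis (Fin r) ℝ (Module.Dual ℝ (Vr r))) :
    (Fin r → ℤ) →+ Module.Dual ℝ (Vr r) := AddMonoidHom.mk' (psiMap bβ) (psiMap_add bβ)

lemma psiMap_neg (bβ : Module.Basis (Fin r) ℝ (Module.Dual ℝ (Vr r))) (v : Fin r → ℤ) :
    psiMap bβ (-v) = -psiMap bβ v := map_neg (psiHom bβ) v

lemma psiMap_sub (bβ : Module.Basis (Fin r) ℝ (Module.Dual ℝ (Vr r))) (v w : Fin r → ℤ) :
    psiMap bβ (v - w) = psiMap bβ v - psiMap bβ w := map_sub (psiHom bβ) v w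

lemma psiMap_zsmul (bβ : Module.Basis (Fin r) ℝ (Module.Dual ℝ (Vr r))) (z : ℤ) (v : Fin r → ℤ) :
    psiMap bβ (z • v) = (z : ℝ) • psiMap bβ v := by
  simp only [psiMap, Pi.smul_apply, smul_eq_mul, Int.cast_mul, Finset.smul_sum, mul_smul]

lemma psiMap_expand (bβ : Module.Basis (Fin r) ℝ (Module.Dual ℝ (Vr r)))
    {f : (Fin r → ℤ) → (Fin r → ℤ)} (hf : IsLinearMap ℤ f) (v : Fin r → ℤ) :
    psiMap bβ (f v) = ∑ k, (v k : ℝ) • psiMap bβ (f (Pi.single k 1)) := by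
  have hv : v = ∑ k, v k • Pi.single k (1 : ℤ) := by
    conv_lhs => rw [← Finset.univ_sum_single v]
    refine Finset.sum_congr rfl fun k _ => ?_
    rw [← Pi.single_smul, smul_eq_mul, mul_one]
  have key : f v = ∑ k, v k • f (Pi.single k (1:ℤ)) := by
    conv_lhs => rw [hv]
    rw [show f (∑ k, v k • Pi.single k (1:ℤ))
        = (IsLinearMap.mk' f hf) (∑ k, v k • Pi.single k (1:ℤ)) from rfl, map_sum]
    simp only [map_smul]
    rfl
  rw [key,
    show psiMap bβ (∑ k, v k • f (Pi.single k (1:ℤ)))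
      = psiHom bβ (∑ k, v k • f (Pi.single k (1:ℤ))) from rfl, map_sum]
  refine Finset.sum_congr rfl fun k _ => ?_
  show psiMap bβ (v k • f (Pi.single k 1)) = _
  rw [psiMap_zsmul]

lemma dual_sum_apply (c : Fin r → ℝ) (L : Fin r → Module.Dual ℝ (Vr r)) (x : Vr r) :
    (∑ k, c k • L k) x = ∑ k, c k * L k x := by
  simp [LinearMap.sum_apply, LinearMap.smul_apply, smul_eq_mul]

lemma psi_pos {b : A} {u} (hu : WeylHom ρ C b a u) {x : Vr r} (hx : x ∈ Kch bβ u)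
    {v : Fin r → ℤ} (h0 : ∀ i, 0 ≤ v i) (hne : v ≠ 0) : 0 < psiMap bβ (u v) x := by
  rw [psiMap_expand bβ (weylHom_isLinear hu) v, dual_sum_apply]
  apply Finset.sum_pos'
  · intro k _
    exact mul_nonneg (by exact_mod_cast h0 k) (le_of_lt (hx k))
  · obtain ⟨k, hk⟩ := Function.ne_iff.mp hne
    refine ⟨k, Finset.mem_univ k, mul_pos ?_ (hx k)⟩
    have : (0:ℤ) < v k := lt_of_le_of_ne (h0 k) (Ne.symm hk)
    exact_mod_cast this

lemma psi_neg {b : A} {u} (hu : WeylHom ρ C b a u) {x : Vr r} (hx : x ∈ Kch bβ u)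
    {v : Fin r → ℤ} (h0 : ∀ i, v i ≤ 0) (hne : v ≠ 0) : psiMap bβ (u v) x < 0 := by
  have h := psi_pos hu hx (v := -v) (fun i => by simpa using h0 i) (neg_ne_zero.mpr hne)
  rw [(weylHom_isLinear hu).map_neg, psiMap_neg] at h
  simp only [LinearMap.neg_apply] at h
  linarith

/-! ### Chambers -/

end Statement14Aux

structure Ch {r : ℕ} {A : Type*} (ρ : Fin r → A → A) (C : A → Matrix (Fin r) (Fin r) ℤ)
    (a : A) where
  b : A
  u : (Fin r → ℤ) → (Fin r → ℤ)
  hu : WeylHom ρ C b a u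

def T0 {r : ℕ} {A : Type*} (ρ : Fin r → A → A) (C : A → Matrix (Fin r) (Fin r) ℤ) (a : A)
    (bβ : Module.Basis (Fin r) ℝ (Module.Dual ℝ (Vr r))) : Set (Vr r) :=
  {x : Vr r | ∃ (b : A) (u : (Fin r → ℤ) → (Fin r → ℤ)),
    WeylHom ρ C b a u ∧ x ∈ Kch bβ u}

section Statement14Aux2

open Relation Filter

variable {r : ℕ} {A : Type*} {ρ : Fin r → A → A} {C : A → Matrix (Fin r) (Fin r) ℤ} {a : A}
variable {bβ : Module.Basis (Fin r) ℝ (Module.Dual ℝ (Vr r))}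

lemma Ch.ext' {c d : Ch ρ C a} (hb : c.b = d.b) (hu : c.u = d.u) : c = d := by
  obtain ⟨cb, cu, hc⟩ := c
  obtain ⟨db, du, hd⟩ := d
  dsimp at hb hu
  cases hb
  cases hu
  rfl

def Kc (bβ : Module.Basis (Fin r) ℝ (Module.Dual ℝ (Vr r))) (c : Ch ρ C a) : Set (Vr r) :=
  Kch bβ c.u

def betaC (bβ : Module.Basis (Fin r) ℝ (Module.Dual ℝ (Vr r))) (c : Ch ρ C a) (k : Fin r) :
    Module.Dual ℝ (Vr r) := psiMap bβ (c.u (Pi.single k 1))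

lemma mem_Kc_iff {x : Vr r} {c : Ch ρ C a} : x ∈ Kc bβ c ↔ ∀ k, 0 < betaC bβ c k x :=
  Iff.rfl

lemma Kc_subset_T0 (bβ : Module.Basis (Fin r) ℝ (Module.Dual ℝ (Vr r))) (c : Ch ρ C a) :
    Kc bβ c ⊆ T0 ρ C a bβ := fun _ hx => ⟨c.b, c.u, c.hu, hx⟩

lemma exists_one_point (hCG : IsCartanGraph ρ C) (bβ : Module.Basis (Fin r) ℝ (Module.Dual ℝ (Vr r)))
    (c : Ch ρ C a) : ∃ x : Vr r, ∀ k, betaC bβ c k x = 1 := by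
  obtain ⟨g, hg, hgu, hug⟩ := weylHom_inverse hCG c.hu
  have hulin := weylHom_isLinear c.hu
  have hglin := weylHom_isLinear hg
  have key : ∀ (f : (Fin r → ℤ) → (Fin r → ℤ)), IsLinearMap ℤ f → ∀ (m : Fin r → ℤ),
      (bβ.constr (M' := Module.Dual ℝ (Vr r)) ℝ (fun j => psiMap bβ (f (Pi.single j 1))))
        (psiMap bβ m) = psiMap bβ (f m) := by
    intro f hf m
    have h1 : psiMap bβ m = ∑ j, (m j : ℝ) • bβ j := rfl
    rw [h1, map_sum]
    simp only [map_smul, Module.Basis.constr_basis]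
    exact (psiMap_expand bβ hf m).symm
  set Tu := bβ.constr (M' := Module.Dual ℝ (Vr r)) ℝ
    (fun j => psiMap bβ (c.u (Pi.single j 1))) with hTu
  set Tv := bβ.constr (M' := Module.Dual ℝ (Vr r)) ℝ
    (fun j => psiMap bβ (g (Pi.single j 1))) with hTv
  have hvu : Tv.comp Tu = LinearMap.id := by
    apply bβ.ext
    intro j
    rw [LinearMap.comp_apply, LinearMap.id_apply]
    conv_lhs => rw [← psiMap_single bβ j]
    rw [key _ hulin, key _ hglin]
    have h2 : g (c.u (Pi.single j 1)) = Pi.single j 1 := congrFun hgu _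
    rw [h2, psiMap_single]
  have huv : Tu.comp Tv = LinearMap.id := by
    apply bβ.ext
    intro j
    rw [LinearMap.comp_apply, LinearMap.id_apply]
    conv_lhs => rw [← psiMap_single bβ j]
    rw [key _ hglin, key _ hulin]
    have h2 : c.u (g (Pi.single j 1)) = Pi.single j 1 := congrFun hug _
    rw [h2, psiMap_single]
  set e := LinearEquiv.ofLinear Tu Tv huv hvu with he
  set Bu := bβ.map e with hBu
  have hBuj : ∀ j, Bu j = betaC bβ c j := by
    intro j
    rw [hBu, Module.Basis.map_apply]
    show Tu (bβ j) = _
    conv_lhs => rw [← psiMap_single bβ j]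
    exact key _ hulin _
  refine ⟨(Module.evalEquiv ℝ (Vr r)).symm (∑ j, Bu.coord j), fun k => ?_⟩
  rw [← hBuj k, Module.apply_evalEquiv_symm_apply, LinearMap.sum_apply]
  simp [Module.Basis.coord_apply, Module.Basis.repr_self, Finsupp.single_apply, Finset.sum_ite_eq]

lemma exists_Kc_point (hCG : IsCartanGraph ρ C) (bβ : Module.Basis (Fin r) ℝ (Module.Dual ℝ (Vr r)))
    (c : Ch ρ C a) : ∃ x : Vr r, x ∈ Kc bβ c := by
  obtain ⟨x, hx⟩ := exists_one_point hCG bβ c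
  refine ⟨x, fun k => ?_⟩
  show 0 < betaC bβ c k x
  rw [hx k]
  norm_num

lemma Kc_open (bβ : Module.Basis (Fin r) ℝ (Module.Dual ℝ (Vr r))) (c : Ch ρ C a) :
    IsOpen (Kc bβ c) := by
  have h : Kc bβ c = ⋂ k, (betaC bβ c k) ⁻¹' Set.Ioi (0:ℝ) := by
    ext x
    simp [Kc, Kch, betaC, Set.mem_iInter, Set.mem_preimage, Set.mem_Ioi]
  rw [h]
  exact isOpen_iInter_of_finite fun k =>
    isOpen_Ioi.preimage (betaC bβ c k).continuous_of_finiteDimensional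

def crossCh (hCG : IsCartanGraph ρ C) (k : Fin r) (c : Ch ρ C a) : Ch ρ C a :=
  ⟨ρ k c.b, c.u ∘ gcmSigma (C c.b) k, weylHom_sourceReflect hCG k c.hu⟩

lemma crossCh_crossCh (hCG : IsCartanGraph ρ C) (k : Fin r) (c : Ch ρ C a) :
    crossCh hCG k (crossCh hCG k c) = c := by
  apply Ch.ext'
  · exact hCG.2.2.1 k c.b
  · show (c.u ∘ gcmSigma (C c.b) k) ∘ gcmSigma (C (ρ k c.b)) k = c.u
    rw [gcmSigma_congr (fun j => (hCG.2.2.2 c.b k j).symm)]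
    funext x
    simp [Function.comp_apply, gcmSigma_gcmSigma _ _ ((hCG.2.1 c.b).1 k)]

lemma gcmSigma_single (M : Matrix (Fin r) (Fin r) ℤ) (k m : Fin r) :
    gcmSigma M k (Pi.single m 1) = Pi.single m 1 - M k m • Pi.single k (1:ℤ) := by
  have hsum : (∑ l, M k l * (Pi.single m (1:ℤ) : Fin r → ℤ) l) = M k m := by
    rw [Finset.sum_eq_single m]
    · simp
    · intro l _ hl
      rw [Pi.single_eq_of_ne hl, mul_zero]
    · intro h; exact absurd (Finset.mem_univ m) h
  funext j
  simp only [gcmSigma, hsum, Pi.sub_apply, Pi.smul_apply, smul_eq_mul]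
  by_cases h : j = k
  · subst h
    simp [Pi.single_apply]
  · simp [Pi.single_apply, h]

lemma betaC_crossCh (hCG : IsCartanGraph ρ C) (bβ : Module.Basis (Fin r) ℝ (Module.Dual ℝ (Vr r)))
    (k : Fin r) (c : Ch ρ C a) (m : Fin r) :
    betaC bβ (crossCh hCG k c) m = betaC bβ c m - (C c.b k m : ℝ) • betaC bβ c k := by
  show psiMap bβ (c.u (gcmSigma (C c.b) k (Pi.single m 1))) = _
  rw [gcmSigma_single]
  have hl := weylHom_isLinear c.hu
  rw [hl.map_sub, hl.map_smul, psiMap_sub, psiMap_zsmul]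
  rfl

/-! ### Roots and chambers -/

lemma betaC_mem_geoR (bβ : Module.Basis (Fin r) ℝ (Module.Dual ℝ (Vr r))) (c : Ch ρ C a) (k : Fin r) :
    betaC bβ c k ∈ geoR ρ C a bβ :=
  ⟨c.u (Pi.single k 1), ⟨c.b, c.u, k, c.hu, rfl⟩, rfl⟩

lemma geoR_rep (hCG : IsCartanGraph ρ C) (bβ : Module.Basis (Fin r) ℝ (Module.Dual ℝ (Vr r)))
    (c : Ch ρ C a) {α} (hα : α ∈ geoR ρ C a bβ) :
    ∃ v ∈ realRootsAt ρ C c.b, α = psiMap bβ (c.u v) := by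
  obtain ⟨w, hw, rfl⟩ := hα
  obtain ⟨v, hv, hwv⟩ := realRoots_rep hCG c.hu hw
  exact ⟨v, hv, by rw [hwv]⟩

lemma geoR_neg (hRS : IsRootSystemOfType ρ C (realRootsAt ρ C)) {α}
    (hα : α ∈ geoR ρ C a bβ) : -α ∈ geoR ρ C a bβ := by
  obtain ⟨w, hw, rfl⟩ := hα
  refine ⟨-w, ?_, psiMap_neg bβ w⟩
  have h1 := hRS.1 a
  rw [h1] at hw
  rcases hw with hw | ⟨p, hp, hpw⟩
  · rw [h1]
    exact Or.inr ⟨w, hw, rfl⟩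
  · rw [← hpw, neg_neg]
    exact hp.1

lemma root_sign (hCG : IsCartanGraph ρ C) (hRS : IsRootSystemOfType ρ C (realRootsAt ρ C))
    (bβ : Module.Basis (Fin r) ℝ (Module.Dual ℝ (Vr r))) (c : Ch ρ C a) {α}
    (hα : α ∈ geoR ρ C a bβ) :
    (∀ x ∈ Kc bβ c, 0 < α x) ∨ (∀ x ∈ Kc bβ c, α x < 0) := by
  obtain ⟨v, hv, rfl⟩ := geoR_rep hCG bβ c hα
  have hvne := realRoots_ne_zero hCG hv
  have hv' := hv
  rw [hRS.1 c.b] at hv'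
  rcases hv' with ⟨hvR, hpos⟩ | ⟨p, ⟨hpR, hppos⟩, hpv⟩
  · left
    intro x hx
    exact psi_pos c.hu hx hpos hvne
  · right
    intro x hx
    apply psi_neg c.hu hx (v := v) ?_ hvne
    intro i
    rw [← hpv]
    simpa using hppos i

/-! ### Separating sets -/

def Ssep (bβ : Module.Basis (Fin r) ℝ (Module.Dual ℝ (Vr r))) (c d : Ch ρ C a) :
    Set (Module.Dual ℝ (Vr r)) :=
  {α | α ∈ geoR ρ C a bβ ∧ (∀ x ∈ Kc bβ c, 0 < α x) ∧ (∀ x ∈ Kc bβ d, α x < 0)}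

lemma Ssep_self (hCG : IsCartanGraph ρ C) (bβ : Module.Basis (Fin r) ℝ (Module.Dual ℝ (Vr r)))
    (c : Ch ρ C a) : Ssep bβ c c = ∅ := by
  ext α
  simp only [Ssep, Set.mem_setOf_eq, Set.mem_empty_iff_false, iff_false]
  rintro ⟨-, h1, h2⟩
  obtain ⟨x, hxK⟩ := exists_Kc_point hCG bβ c
  exact absurd (h1 x hxK) (not_lt.mpr (le_of_lt (h2 x hxK)))

lemma Ssep_tri (hCG : IsCartanGraph ρ C) (hRS : IsRootSystemOfType ρ C (realRootsAt ρ C))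
    (bβ : Module.Basis (Fin r) ℝ (Module.Dual ℝ (Vr r))) (c e d : Ch ρ C a) :
    Ssep bβ c d ⊆ Ssep bβ c e ∪ Ssep bβ e d := by
  rintro α ⟨hR, h1, h2⟩
  rcases root_sign hCG hRS bβ e hR with h | h
  · exact Or.inr ⟨hR, h, h2⟩
  · exact Or.inl ⟨hR, h1, h⟩

lemma Ssep_cross (hCG : IsCartanGraph ρ C) (hRS : IsRootSystemOfType ρ C (realRootsAt ρ C))
    (bβ : Module.Basis (Fin r) ℝ (Module.Dual ℝ (Vr r))) (k : Fin r) (c : Ch ρ C a) :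
    Ssep bβ c (crossCh hCG k c) ⊆ {betaC bβ c k} := by
  rintro α ⟨hR, h1, h2⟩
  obtain ⟨v, hv, rfl⟩ := geoR_rep hCG bβ c hR
  obtain ⟨x, hxK⟩ := exists_Kc_point hCG bβ c
  obtain ⟨x', hxK'⟩ := exists_Kc_point hCG bβ (crossCh hCG k c)
  have hvne := realRoots_ne_zero hCG hv
  have hvnn : ∀ i, 0 ≤ v i := by
    have hv' := hv
    rw [hRS.1 c.b] at hv'
    rcases hv' with ⟨-, h⟩ | ⟨p, ⟨hpR, hp⟩, hpv⟩
    · exact h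
    · exfalso
      have hneg := psi_neg c.hu hxK (v := v) (fun i => by rw [← hpv]; simpa using hp i) hvne
      linarith [h1 x hxK]
  set w := gcmSigma (C c.b) k v with hw
  have hwroot : w ∈ realRootsAt ρ C (ρ k c.b) := by
    rw [← hRS.2.2.1 c.b k]
    exact ⟨v, hv, rfl⟩
  have hinv : gcmSigma (C c.b) k w = v := by
    rw [hw, gcmSigma_gcmSigma _ _ ((hCG.2.1 c.b).1 k)]
  have heq : psiMap bβ (c.u v) = psiMap bβ ((crossCh hCG k c).u w) := by
    show _ = psiMap bβ (c.u (gcmSigma (C c.b) k w))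
    rw [hinv]
  have hwne : w ≠ 0 := by
    intro h0
    apply hvne
    rw [← hinv, h0]
    exact (gcmSigma_isLinear (C c.b) k).map_zero
  have hwnp : ∀ i, w i ≤ 0 := by
    have hw' := hwroot
    rw [hRS.1 (ρ k c.b)] at hw'
    rcases hw' with ⟨-, h⟩ | ⟨p, ⟨hpR, hp⟩, hpw⟩
    · exfalso
      have hpos := psi_pos (crossCh hCG k c).hu hxK' h hwne
      rw [← heq] at hpos
      linarith [h2 x' hxK']
    · intro i
      rw [← hpw]
      simpa using hp i
  have hvk : ∀ m, m ≠ k → v m = 0 := by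
    intro m hm
    have h1m : w m = v m := by
      rw [hw]
      simp [gcmSigma, hm]
    exact le_antisymm (h1m ▸ hwnp m) (hvnn m)
  have hvs : v = v k • Pi.single k (1:ℤ) := by
    funext j
    by_cases h : j = k
    · subst h
      simp
    · rw [hvk j h]
      simp [Pi.single_apply, h]
  have hv2 : v ∈ {v ∈ realRootsAt ρ C c.b | ∃ n : ℤ, v = n • Pi.single k 1} := ⟨hv, v k, hvs⟩
  rw [hRS.2.1 c.b k] at hv2
  simp only [Set.mem_insert_iff, Set.mem_singleton_iff] at hv2
  rcases hv2 with h | h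
  · rw [Set.mem_singleton_iff, h]
    rfl
  · exfalso
    rw [h] at hvnn
    simpa using hvnn k

lemma Ssep_cross_eq (hCG : IsCartanGraph ρ C) (hRS : IsRootSystemOfType ρ C (realRootsAt ρ C))
    (bβ : Module.Basis (Fin r) ℝ (Module.Dual ℝ (Vr r))) {k : Fin r} {c d : Ch ρ C a}
    (hk : ∀ x ∈ Kc bβ d, betaC bβ c k x < 0) :
    Ssep bβ (crossCh hCG k c) d = Ssep bβ c d \ {betaC bβ c k} := by
  obtain ⟨x', hxK'⟩ := exists_Kc_point hCG bβ (crossCh hCG k c)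
  obtain ⟨y, hyd⟩ := exists_Kc_point hCG bβ d
  have h2cast : ((C c.b k k : ℤ) : ℝ) = 2 := by
    rw [(hCG.2.1 c.b).1 k]
    norm_num
  have hbkneg : betaC bβ c k x' < 0 := by
    have h : 0 < betaC bβ (crossCh hCG k c) k x' := hxK' k
    rw [betaC_crossCh hCG bβ k c k] at h
    simp only [LinearMap.sub_apply, LinearMap.smul_apply, smul_eq_mul, h2cast] at h
    linarith
  ext α
  constructor
  · rintro ⟨hR, h1, h2⟩
    rcases root_sign hCG hRS bβ c hR with hpos | hneg
    · refine ⟨⟨hR, hpos, h2⟩, ?_⟩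
      intro hmem
      rw [Set.mem_singleton_iff] at hmem
      rw [hmem] at h1
      linarith [h1 x' hxK', hbkneg]
    · exfalso
      have hnegR := geoR_neg hRS hR
      have hmem : -α ∈ Ssep bβ c (crossCh hCG k c) :=
        ⟨hnegR, fun z hz => by simp only [LinearMap.neg_apply]; linarith [hneg z hz],
          fun z hz => by simp only [LinearMap.neg_apply]; linarith [h1 z hz]⟩
      have hsing := Ssep_cross hCG hRS bβ k c hmem
      rw [Set.mem_singleton_iff] at hsing
      have hαy : α y = -(betaC bβ c k y) := by
        rw [← hsing]
        simp
      have h2y := h2 y hyd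
      have hky := hk y hyd
      rw [hαy] at h2y
      linarith
  · rintro ⟨⟨hR, h1, h2⟩, hne⟩
    rw [Set.mem_singleton_iff] at hne
    refine ⟨hR, ?_, h2⟩
    rcases root_sign hCG hRS bβ (crossCh hCG k c) hR with hpos | hneg
    · exact hpos
    · exfalso
      have hmem : α ∈ Ssep bβ c (crossCh hCG k c) := ⟨hR, h1, hneg⟩
      have hsing := Ssep_cross hCG hRS bβ k c hmem
      rw [Set.mem_singleton_iff] at hsing
      exact hne hsing

/-! ### Connectivity of the chamber graph and finiteness of separating sets -/

def chrel (hCG : IsCartanGraph ρ C) (a : A) : Ch ρ C a → Ch ρ C a → Prop :=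
  fun c d => ∃ k, d = crossCh hCG k c

lemma chrel_symm (hCG : IsCartanGraph ρ C) : Symmetric (chrel hCG a) := by
  rintro c d ⟨k, rfl⟩
  exact ⟨k, (crossCh_crossCh hCG k c).symm⟩

lemma chrel_chain (hCG : IsCartanGraph ρ C) {b c : A} {u} (h : WeylHom ρ C b c u) :
    ∀ (w : (Fin r → ℤ) → (Fin r → ℤ)) (hw : WeylHom ρ C c a w),
      Relation.ReflTransGen (chrel hCG a) ⟨c, w, hw⟩ ⟨b, w ∘ u, h.trans hw⟩ := by
  induction h with
  | id =>
      intro w hw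
      exact Relation.ReflTransGen.refl
  | @comp e f₀ j h ih =>
      intro w hw
      have hstep : chrel hCG a ⟨ρ j e, w, hw⟩
          ⟨e, w ∘ gcmSigma (C e) j, (WeylHom.comp j (WeylHom.id e)).trans hw⟩ := by
        refine ⟨j, ?_⟩
        apply Ch.ext'
        · exact (hCG.2.2.1 j e).symm
        · show w ∘ gcmSigma (C e) j = w ∘ gcmSigma (C (ρ j e)) j
          rw [gcmSigma_congr (fun i => hCG.2.2.2 e j i)]
      exact Relation.ReflTransGen.head hstep
        (ih (w ∘ gcmSigma (C e) j) ((WeylHom.comp j (WeylHom.id e)).trans hw))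

lemma chrel_conn (hCG : IsCartanGraph ρ C) (c d : Ch ρ C a) :
    Relation.ReflTransGen (chrel hCG a) c d := by
  have hc : Relation.ReflTransGen (chrel hCG a) ⟨a, _root_.id, WeylHom.id a⟩ c :=
    chrel_chain hCG c.hu _root_.id (WeylHom.id a)
  have hd : Relation.ReflTransGen (chrel hCG a) ⟨a, _root_.id, WeylHom.id a⟩ d :=
    chrel_chain hCG d.hu _root_.id (WeylHom.id a)
  exact (haveI : Std.Symm (chrel hCG a) := ⟨fun _ _ h => chrel_symm hCG h⟩
    Std.Symm.symm _ _ hc).trans hd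

lemma Ssep_finite (hCG : IsCartanGraph ρ C) (hRS : IsRootSystemOfType ρ C (realRootsAt ρ C))
    (bβ : Module.Basis (Fin r) ℝ (Module.Dual ℝ (Vr r))) (c d : Ch ρ C a) :
    (Ssep bβ c d).Finite := by
  have h := chrel_conn hCG c d
  induction h with
  | refl =>
      rw [Ssep_self hCG bβ c]
      exact Set.finite_empty
  | @tail mid fin h1 h2 ih =>
      obtain ⟨k, rfl⟩ := h2
      exact Set.Finite.subset (ih.union (Set.finite_singleton (betaC bβ mid k)))
        ((Ssep_tri hCG hRS bβ c mid (crossCh hCG k mid)).trans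
          (Set.union_subset_union_right _ (Ssep_cross hCG hRS bβ k mid)))

/-! ### The key geometric lemma: segments between chamber points lie in the closure
of the union of the chambers -/

lemma lemD (hCG : IsCartanGraph ρ C) (hRS : IsRootSystemOfType ρ C (realRootsAt ρ C))
    (bβ : Module.Basis (Fin r) ℝ (Module.Dual ℝ (Vr r))) :
    ∀ (n : ℕ) (c d : Ch ρ C a), (Ssep bβ c d).ncard = n →
      ∀ p q, p ∈ Kc bβ c → q ∈ Kc bβ d →
        segment ℝ p q ⊆ closure (T0 ρ C a bβ) := by
  intro n
  induction n using Nat.strong_induction_on with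
  | _ n ih =>
  intro c d hn p q hp hq z hz
  obtain ⟨tp, t, htp, ht0, hsum, rfl⟩ := hz
  have ht1 : t ≤ 1 := by linarith
  have hpk : ∀ k, 0 < betaC bβ c k p := hp
  -- the crossing parameters
  have hBcomb : ∀ (γ : Module.Dual ℝ (Vr r)) (u v : ℝ),
      γ (u • p + v • q) = u * γ p + v * γ q := by
    intro γ u v
    simp [map_add, map_smul, smul_eq_mul]
  classical
  let f : Fin r → ℝ := fun k =>
    if betaC bβ c k q ≤ 0 then betaC bβ c k p / (betaC bβ c k p - betaC bβ c k q) else 1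
  let s : Finset ℝ := insert (1:ℝ) (Finset.image f Finset.univ)
  have hs1 : (1:ℝ) ∈ s := Finset.mem_insert_self _ _
  let tstar := s.min' ⟨1, hs1⟩
  have htstar_le_one : tstar ≤ 1 := Finset.min'_le _ _ hs1
  have hfk_pos : ∀ k, 0 < f k := by
    intro k
    show 0 < if betaC bβ c k q ≤ 0 then _ else 1
    split
    · next h =>
        have hD : 0 < betaC bβ c k p - betaC bβ c k q := by linarith [hpk k]
        exact div_pos (hpk k) hD
    · norm_num
  have htstar_pos : 0 < tstar := by
    apply (Finset.lt_min'_iff _ _).mpr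
    intro y hy
    rcases Finset.mem_insert.mp hy with rfl | hy
    · norm_num
    · obtain ⟨k, -, rfl⟩ := Finset.mem_image.mp hy
      exact hfk_pos k
  have htstar_le_f : ∀ k, tstar ≤ f k := fun k =>
    Finset.min'_le _ _ (Finset.mem_insert_of_mem (Finset.mem_image_of_mem f (Finset.mem_univ k)))
  have hinK : ∀ t', 0 ≤ t' → t' < tstar → (1 - t') • p + t' • q ∈ Kc bβ c := by
    intro t' h0 hlt k
    show 0 < betaC bβ c k ((1 - t') • p + t' • q)
    rw [hBcomb]
    have hfk := htstar_le_f k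
    by_cases hq0 : betaC bβ c k q ≤ 0
    · have hD : 0 < betaC bβ c k p - betaC bβ c k q := by linarith [hpk k]
      have hlt2 : t' < betaC bβ c k p / (betaC bβ c k p - betaC bβ c k q) := by
        calc t' < tstar := hlt
          _ ≤ f k := hfk
          _ = _ := by simp only [f, if_pos hq0]
      have h2 : t' * (betaC bβ c k p - betaC bβ c k q) < betaC bβ c k p :=
        (lt_div_iff₀ hD).mp hlt2
      have h3 : (1 - t') * betaC bβ c k p + t' * betaC bβ c k q
          = betaC bβ c k p - t' * (betaC bβ c k p - betaC bβ c k q) := by ring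
      linarith
    · push_neg at hq0
      have hlt1 : t' < 1 := lt_of_lt_of_le hlt htstar_le_one
      have h1 : 0 < (1 - t') * betaC bβ c k p := mul_pos (by linarith) (hpk k)
      have h2 : 0 ≤ t' * betaC bβ c k q := mul_nonneg h0 (le_of_lt hq0)
      linarith
  have hzs_nonneg : ∀ m, 0 ≤ betaC bβ c m ((1 - tstar) • p + tstar • q) := by
    intro m
    rw [hBcomb]
    by_cases hq0 : betaC bβ c m q ≤ 0
    · have hD : 0 < betaC bβ c m p - betaC bβ c m q := by linarith [hpk m]
      have hfm : tstar ≤ betaC bβ c m p / (betaC bβ c m p - betaC bβ c m q) := by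
        have h := htstar_le_f m
        rwa [show f m = betaC bβ c m p / (betaC bβ c m p - betaC bβ c m q) from by
          simp only [f, if_pos hq0]] at h
      have h2 : tstar * (betaC bβ c m p - betaC bβ c m q) ≤ betaC bβ c m p :=
        (le_div_iff₀ hD).mp hfm
      have h3 : (1 - tstar) * betaC bβ c m p + tstar * betaC bβ c m q
          = betaC bβ c m p - tstar * (betaC bβ c m p - betaC bβ c m q) := by ring
      linarith
    · push_neg at hq0
      have h1 : 0 ≤ (1 - tstar) * betaC bβ c m p :=
        mul_nonneg (by linarith) (le_of_lt (hpk m))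
      have h2 : 0 ≤ tstar * betaC bβ c m q :=
        mul_nonneg (le_of_lt htstar_pos) (le_of_lt hq0)
      linarith
  rcases eq_or_lt_of_le htstar_le_one with htop | hlt1
  · -- tstar = 1 : the whole half-open segment lies in K^c
    rcases lt_or_eq_of_le ht1 with htlt | hteq
    · apply subset_closure
      apply Kc_subset_T0 bβ c
      rw [show tp = 1 - t from by linarith]
      exact hinK t ht0 (by rw [htop]; exact htlt)
    · have hzq : tp • p + t • q = q := by
        rw [show tp = 0 from by linarith, show t = 1 from hteq]
        simp
      rw [hzq]
      exact subset_closure (Kc_subset_T0 bβ d hq)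
  · -- tstar < 1 : cross the wall k
    have hmem := Finset.min'_mem s ⟨1, hs1⟩
    rcases Finset.mem_insert.mp hmem with h1 | hmem'
    · have h1' : tstar = 1 := h1
      rw [h1'] at hlt1
      exact absurd hlt1 (lt_irrefl 1)
    · obtain ⟨k, -, hk⟩ := Finset.mem_image.mp hmem'
      have hk' : f k = tstar := hk
      have hq0 : betaC bβ c k q ≤ 0 := by
        by_contra hq0
        push_neg at hq0
        rw [show f k = 1 from by simp only [f, if_neg (not_le.mpr hq0)]] at hk'
        rw [← hk'] at hlt1
        exact lt_irrefl _ hlt1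
      have hqneg : betaC bβ c k q < 0 := by
        rcases lt_or_eq_of_le hq0 with h | h
        · exact h
        · exfalso
          rw [show f k = betaC bβ c k p / (betaC bβ c k p - betaC bβ c k q) from by
            simp only [f, if_pos hq0], h, sub_zero,
            div_self (ne_of_gt (hpk k))] at hk'
          rw [← hk'] at hlt1
          exact lt_irrefl _ hlt1
      have hD : 0 < betaC bβ c k p - betaC bβ c k q := by linarith [hpk k]
      have hβkzs : betaC bβ c k ((1 - tstar) • p + tstar • q) = 0 := by
        rw [hBcomb]
        rw [show tstar = betaC bβ c k p / (betaC bβ c k p - betaC bβ c k q) from by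
          rw [← hk']; simp only [f, if_pos hq0]]
        field_simp
        ring
      have hneg : ∀ x ∈ Kc bβ d, betaC bβ c k x < 0 := by
        rcases root_sign hCG hRS bβ d (betaC_mem_geoR bβ c k) with hpos | hneg
        · exfalso
          linarith [hpos q hq]
        · exact hneg
      have hSeq := Ssep_cross_eq hCG hRS bβ (k := k) (c := c) (d := d) hneg
      have hSfin := Ssep_finite hCG hRS bβ c d
      have hβmem : betaC bβ c k ∈ Ssep bβ c d :=
        ⟨betaC_mem_geoR bβ c k, fun x hx => hx k, hneg⟩
      have hcard : (Ssep bβ (crossCh hCG k c) d).ncard < n := by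
        rw [hSeq, ← hn]
        exact Set.ncard_diff_singleton_lt_of_mem hβmem hSfin
      have hIH := ih _ hcard (crossCh hCG k c) d rfl
      obtain ⟨x₀, hx₀⟩ := exists_one_point hCG bβ (crossCh hCG k c)
      have hx₀K : ∀ ε : ℝ, 0 < ε →
          ((1 - tstar) • p + tstar • q) + ε • x₀ ∈ Kc bβ (crossCh hCG k c) := by
        intro ε hε m
        show 0 < betaC bβ (crossCh hCG k c) m (((1 - tstar) • p + tstar • q) + ε • x₀)
        have h2 : betaC bβ (crossCh hCG k c) m (((1 - tstar) • p + tstar • q) + ε • x₀)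
            = betaC bβ (crossCh hCG k c) m ((1 - tstar) • p + tstar • q)
              + ε * betaC bβ (crossCh hCG k c) m x₀ := by
          simp [map_add, map_smul, smul_eq_mul]
        have h1 : betaC bβ (crossCh hCG k c) m ((1 - tstar) • p + tstar • q)
            = betaC bβ c m ((1 - tstar) • p + tstar • q)
              - (C c.b k m : ℝ) * betaC bβ c k ((1 - tstar) • p + tstar • q) := by
          rw [betaC_crossCh hCG bβ k c m]
          simp [LinearMap.sub_apply, LinearMap.smul_apply, smul_eq_mul]
        rw [h2, h1, hβkzs, hx₀ m, mul_zero, sub_zero, mul_one]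
        linarith [hzs_nonneg m, hε]
      rcases lt_or_ge t tstar with hcase | hcase
      · apply subset_closure
        apply Kc_subset_T0 bβ c
        rw [show tp = 1 - t from by linarith]
        exact hinK t ht0 hcase
      · -- approximate along the wall face
        have h1t : 0 < 1 - tstar := by linarith
        have hsc0 : 0 ≤ (t - tstar) / (1 - tstar) := div_nonneg (by linarith) (le_of_lt h1t)
        have hsc1 : (t - tstar) / (1 - tstar) ≤ 1 := by
          rw [div_le_one h1t]; linarith
        set sc := (t - tstar) / (1 - tstar) with hscdef
        have hval : ∀ ε : ℝ, 0 < ε →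
            (1 - sc) • (((1 - tstar) • p + tstar • q) + ε • x₀) + sc • q
              ∈ closure (T0 ρ C a bβ) := by
          intro ε hε
          apply hIH (((1 - tstar) • p + tstar • q) + ε • x₀) q (hx₀K ε hε) hq
          exact ⟨1 - sc, sc, by linarith, hsc0, by ring, rfl⟩
        have hcont : Filter.Tendsto
            (fun ε : ℝ => (1 - sc) • (((1 - tstar) • p + tstar • q) + ε • x₀) + sc • q)
            (nhdsWithin 0 (Set.Ioi 0))
            (nhds ((1 - sc) • ((1 - tstar) • p + tstar • q) + sc • q)) := by
          have hc1 : Continuous (fun ε : ℝ => ((1 - tstar) • p + tstar • q) + ε • x₀) :=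
            continuous_const.add (continuous_id.smul continuous_const)
          have hc2 : Continuous (fun ε : ℝ =>
              (1 - sc) • (((1 - tstar) • p + tstar • q) + ε • x₀) + sc • q) :=
            (hc1.const_smul (1 - sc)).add continuous_const
          have hc3 := hc2.tendsto 0
          simp only [zero_smul, add_zero] at hc3
          exact hc3.mono_left nhdsWithin_le_nhds
        have hzeq : (1 - sc) • ((1 - tstar) • p + tstar • q) + sc • q = tp • p + t • q := by
          have h1 : (1 - sc) * (1 - tstar) = tp := by
            rw [hscdef]
            field_simp
            linarith
          have h2 : (1 - sc) * tstar + sc = t := by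
            rw [hscdef]
            field_simp
            ring
          rw [smul_add, smul_smul, smul_smul, h1, add_assoc, ← add_smul, h2]
        rw [← hzeq]
        exact isClosed_closure.mem_of_tendsto hcont
          (Filter.eventually_of_mem self_mem_nhdsWithin (fun ε hε => hval ε hε))

lemma lemE (hCG : IsCartanGraph ρ C) (hRS : IsRootSystemOfType ρ C (realRootsAt ρ C))
    (bβ : Module.Basis (Fin r) ℝ (Module.Dual ℝ (Vr r))) {x w : Vr r}
    (hx : x ∈ T0 ρ C a bβ)
    (hw : ∃ p ∈ T0 ρ C a bβ, ∃ q ∈ T0 ρ C a bβ, w ∈ segment ℝ p q) :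
    ∀ z ∈ segment ℝ x w, ∃ p ∈ T0 ρ C a bβ, ∃ q ∈ T0 ρ C a bβ, z ∈ segment ℝ p q := by
  intro z hz
  obtain ⟨az, bz, haz, hbz, habz, rfl⟩ := hz
  rcases eq_or_lt_of_le hbz with hb0 | hbpos
  · refine ⟨x, hx, x, hx, ?_⟩
    rw [← hb0, show az = 1 from by linarith, one_smul, zero_smul, add_zero]
    exact left_mem_segment ℝ x x
  · rcases eq_or_lt_of_le haz with ha0 | hapos
    · obtain ⟨p, hp, q, hq, hseg⟩ := hw
      refine ⟨p, hp, q, hq, ?_⟩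
      rw [← ha0, show bz = 1 from by linarith, zero_smul, one_smul, zero_add]
      exact hseg
    · obtain ⟨p, hp, q, hq, hseg⟩ := hw
      obtain ⟨bp, up, hup, hpK⟩ := hp
      obtain ⟨bq, uq, huq, hqK⟩ := hq
      have hwcl : w ∈ closure (T0 ρ C a bβ) :=
        lemD hCG hRS bβ _ ⟨bp, up, hup⟩ ⟨bq, uq, huq⟩ rfl p q hpK hqK hseg
      obtain ⟨bx, ux, hux, hxK⟩ := hx
      have hφcont : Continuous (fun y : Vr r => x + (bz / az) • (w - y)) :=
        by fun_prop
      have hO : IsOpen ((fun y : Vr r => x + (bz / az) • (w - y)) ⁻¹'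
          (Kc bβ ⟨bx, ux, hux⟩)) :=
        (Kc_open bβ _).preimage hφcont
      have hwO : w ∈ (fun y : Vr r => x + (bz / az) • (w - y)) ⁻¹'
          (Kc bβ ⟨bx, ux, hux⟩) := by
        simp only [Set.mem_preimage, sub_self, smul_zero, add_zero]
        exact hxK
      obtain ⟨w', hw'O, hw'T⟩ := mem_closure_iff.mp hwcl _ hO hwO
      refine ⟨x + (bz / az) • (w - w'), Kc_subset_T0 bβ _ hw'O, w', hw'T,
        az, bz, haz, le_of_lt hbpos, habz, ?_⟩
      rw [smul_add, smul_smul,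
        show az * (bz / az) = bz from by field_simp, smul_sub]
      abel

end Statement14Aux2

/-- in the geometric realization of a connected simply connected Cartan
graph `𝒞` with real root system, let `T₀ = ⋃_{b ∈ A} K^b` and let `T` be the convex hull
of `T₀`.  Then `T = ⋃_{x,y ∈ T₀} [x,y]`: the union of all closed segments between points
of `T₀` is already convex and equals the convex hull. -/
theorem statement_14 {r : ℕ} {A : Type*}
    (ρ : Fin r → A → A) (C : A → Matrix (Fin r) (Fin r) ℤ)
    (hCG : IsCartanGraph ρ C) (hconn : CGConnected ρ C) (hsc : CGSimplyConnected ρ C)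
    (hRS : IsRootSystemOfType ρ C (realRootsAt ρ C))
    (a : A) (bβ : Module.Basis (Fin r) ℝ (Module.Dual ℝ (Vr r)))
    :
    convexHull ℝ {x : Vr r | ∃ (b : A) (u : (Fin r → ℤ) → (Fin r → ℤ)),
        WeylHom ρ C b a u ∧ x ∈ Kch bβ u} =
      {z : Vr r |
        ∃ x ∈ {x : Vr r | ∃ (b : A) (u : (Fin r → ℤ) → (Fin r → ℤ)),
          WeylHom ρ C b a u ∧ x ∈ Kch bβ u},
        ∃ y ∈ {x : Vr r | ∃ (b : A) (u : (Fin r → ℤ) → (Fin r → ℤ)),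
          WeylHom ρ C b a u ∧ x ∈ Kch bβ u},
        z ∈ segment ℝ x y} := by
  show convexHull ℝ (T0 ρ C a bβ) =
    {z : Vr r | ∃ x ∈ T0 ρ C a bβ, ∃ y ∈ T0 ρ C a bβ, z ∈ segment ℝ x y}
  apply Set.Subset.antisymm
  · apply convexHull_min
    · intro x hx
      exact ⟨x, hx, x, hx, left_mem_segment ℝ x x⟩
    · rintro z₁ hz₁ z₂ hz₂ sa sb hsa hsb hab
      obtain ⟨x₁, hx₁, y₁, hy₁, hseg₁⟩ := hz₁
      obtain ⟨σ, τ, hσ, hτ, hστ, rfl⟩ := hseg₁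
      rcases eq_or_lt_of_le hsb with hb0 | hbpos
      · rw [← hb0, show sa = 1 from by linarith, one_smul, zero_smul, add_zero]
        exact ⟨x₁, hx₁, y₁, hy₁, σ, τ, hσ, hτ, hστ, rfl⟩
      · have hθ : 0 < sa * τ + sb := by
          have := mul_nonneg hsa hτ
          linarith
        have hwU : ∃ p ∈ T0 ρ C a bβ, ∃ q ∈ T0 ρ C a bβ,
            (sa * τ / (sa * τ + sb)) • y₁ + (sb / (sa * τ + sb)) • z₂ ∈ segment ℝ p q := by
          apply lemE hCG hRS bβ hy₁ hz₂
          exact ⟨sa * τ / (sa * τ + sb), sb / (sa * τ + sb),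
            div_nonneg (mul_nonneg hsa hτ) (le_of_lt hθ),
            div_nonneg hsb (le_of_lt hθ), by field_simp, rfl⟩
        have hkey : (sa * σ) • x₁ + (sa * τ + sb) •
            ((sa * τ / (sa * τ + sb)) • y₁ + (sb / (sa * τ + sb)) • z₂)
            = sa • (σ • x₁ + τ • y₁) + sb • z₂ := by
          rw [smul_add, smul_smul, smul_smul,
            show (sa * τ + sb) * (sa * τ / (sa * τ + sb)) = sa * τ from by field_simp,
            show (sa * τ + sb) * (sb / (sa * τ + sb)) = sb from by field_simp,
            smul_add, smul_smul, smul_smul]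
          abel
        apply lemE hCG hRS bβ hx₁ hwU
        exact ⟨sa * σ, sa * τ + sb, mul_nonneg hsa hσ, le_of_lt hθ,
          by linear_combination sa * hστ + hab, hkey⟩
  · rintro z ⟨x, hx, y, hy, hz⟩
    exact (convex_convexHull ℝ _).segment_subset (subset_convexHull ℝ _ hx)
      (subset_convexHull ℝ _ hy) hz
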